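/- With θ and ζ = ζ* as in Definition 3.9 (parameters L, R > 0, N ≥ 1), the vector x_{N+1} := −∑_{j=0}^{N} ζ_j/√(ζ_j − ζ_{j+1}) · e_j ∈ ℝ^{N+1} satisfies ‖x_{N+1}‖² = ∑_{j=0}^{N} ζ_j²/(ζ_j − ζ_{j+1}) = R². -/

import Mathlib

set_option maxHeartbeats 1600000 in
theorem xstar_norm (N : ℕ) (hN : 1 ≤ N) (L R : ℝ) (hL : 0 < L) (hR : 0 < R)
    (θ ζ : ℕ → ℝ) (h0 : θ 0 = 1)
    (hrec : ∀ i : ℕ, 1 ≤ i → i < N → θ i = (1 + Real.sqrt (1 + 4 * θ (i - 1) ^ 2)) / 2)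
    (hlast : θ N = (1 + Real.sqrt (1 + 8 * θ (N - 1) ^ 2)) / 2)
    (hζ2 : ζ (N + 2) = 0)
    (hζ1 : ζ (N + 1) = (θ N - 1) * R ^ 2 / (θ N ^ 2 * (2 * θ N - 1)))
    (hζN : ζ N = θ N / (θ N - 1) * ζ (N + 1))
    (hζi : ∀ i : ℕ, i < N → ζ i = 2 * θ i / (2 * θ i - 1) * ζ (i + 1))
    (x : EuclideanSpace ℝ (Fin (N + 1)))
    (hx : ∀ j : Fin (N + 1), x j = -(ζ j / Real.sqrt (ζ j - ζ (j + 1)))) :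
    ‖x‖ ^ 2 = (∑ j ∈ Finset.range (N + 1), ζ j ^ 2 / (ζ j - ζ (j + 1))) ∧ ‖x‖ ^ 2 = R ^ 2 := by
  -- θ i ≥ 1 for i < N
  have hθ1 : ∀ i, i < N → 1 ≤ θ i := by
    intro i hi
    rcases Nat.eq_zero_or_pos i with h | h
    · simp [h, h0]
    · rw [hrec i h hi]
      have h1 : (1 : ℝ) ≤ Real.sqrt (1 + 4 * θ (i - 1) ^ 2) := by
        have := Real.sqrt_le_sqrt (show (1:ℝ) ≤ 1 + 4 * θ (i - 1) ^ 2 by nlinarith [sq_nonneg (θ (i-1))])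
        simpa using this
      linarith
  have hθm : 1 ≤ θ (N - 1) := by
    rcases Nat.eq_or_lt_of_le hN with h | h
    · rw [show N - 1 = 0 by omega, h0]
    · exact hθ1 (N - 1) (by omega)
  have hθN : 2 ≤ θ N := by
    rw [hlast]
    have h1 : (3 : ℝ) ≤ Real.sqrt (1 + 8 * θ (N - 1) ^ 2) := by
      have := Real.sqrt_le_sqrt (show (9:ℝ) ≤ 1 + 8 * θ (N - 1) ^ 2 by nlinarith)
      rwa [show (9:ℝ) = 3 ^ 2 by norm_num, Real.sqrt_sq (by norm_num)] at this
    linarith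
  -- square relations
  have hsqN : θ N ^ 2 - θ N = 2 * θ (N - 1) ^ 2 := by
    have h2 : 2 * θ N - 1 = Real.sqrt (1 + 8 * θ (N - 1) ^ 2) := by rw [hlast]; ring
    have h3 : (2 * θ N - 1) ^ 2 = 1 + 8 * θ (N - 1) ^ 2 := by
      rw [h2, Real.sq_sqrt (by positivity)]
    nlinarith
  have hsqi : ∀ m, m + 1 < N → θ (m + 1) ^ 2 - θ (m + 1) = θ m ^ 2 := by
    intro m hm
    have h2 : 2 * θ (m + 1) - 1 = Real.sqrt (1 + 4 * θ m ^ 2) := by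
      have := hrec (m + 1) (by omega) hm
      simp only [Nat.add_sub_cancel] at this
      rw [this]; ring
    have h3 : (2 * θ (m + 1) - 1) ^ 2 = 1 + 4 * θ m ^ 2 := by
      rw [h2, Real.sq_sqrt (by positivity)]
    nlinarith
  -- positivity of ζ
  have hζN1pos : 0 < ζ (N + 1) := by
    rw [hζ1]
    apply div_pos (by nlinarith) (by nlinarith)
  have hζNpos : 0 < ζ N := by
    rw [hζN]
    exact mul_pos (div_pos (by linarith) (by linarith)) hζN1pos
  have hζpos : ∀ i, i ≤ N → 0 < ζ i := by
    have key : ∀ d, 0 < ζ (N - d) := by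
      intro d
      induction d with
      | zero => simpa using hζNpos
      | succ d ih =>
        rcases le_or_gt N d with h | h
        · rw [show N - (d + 1) = N - d by omega]; exact ih
        · have hi : N - (d + 1) < N := by omega
          rw [hζi _ hi, show N - (d + 1) + 1 = N - d by omega]
          have := hθ1 _ hi
          exact mul_pos (div_pos (by linarith) (by linarith)) ih
    intro i hi
    have := key (N - i)
    rwa [show N - (N - i) = i by omega] at this
  -- positivity of differences
  have hdiff : ∀ j, j ≤ N → 0 < ζ j - ζ (j + 1) := by
    intro j hj
    rcases Nat.eq_or_lt_of_le hj with h | h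
    · subst h
      rw [hζN]
      have h1 : (0:ℝ) < θ j - 1 := by linarith
      have h2 : (1:ℝ) < θ j / (θ j - 1) := (one_lt_div h1).mpr (by linarith)
      nlinarith
    · rw [hζi j h]
      have hθ := hθ1 j h
      have hz1 := hζpos (j + 1) (by omega)
      have h2 : (1:ℝ) < 2 * θ j / (2 * θ j - 1) := (one_lt_div (by linarith)).mpr (by linarith)
      nlinarith
  -- norm equals the sum
  have hnorm : ‖x‖ ^ 2 = ∑ j ∈ Finset.range (N + 1), ζ j ^ 2 / (ζ j - ζ (j + 1)) := by
    have h1 : ‖x‖ ^ 2 = ∑ j : Fin (N + 1), x j ^ 2 := by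
      rw [EuclideanSpace.norm_eq, Real.sq_sqrt (by positivity)]
      simp [Real.norm_eq_abs, sq_abs]
    have h2 : ∀ j : Fin (N + 1), x j ^ 2 = ζ (j : ℕ) ^ 2 / (ζ (j : ℕ) - ζ ((j : ℕ) + 1)) := by
      intro j
      have hd := hdiff (j : ℕ) (by omega)
      rw [hx j, neg_sq, div_pow, Real.sq_sqrt hd.le]
    rw [h1]
    rw [Finset.sum_congr rfl (fun j _ => h2 j)]
    exact Fin.sum_univ_eq_sum_range (fun j => ζ j ^ 2 / (ζ j - ζ (j + 1))) (N + 1)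
  refine ⟨hnorm, ?_⟩
  rw [hnorm]
  -- individual term values
  have hterm1 : ∀ j, j < N → ζ j ^ 2 / (ζ j - ζ (j + 1)) = 2 * θ j * ζ j := by
    intro j hj
    have hθ := hθ1 j hj
    have hz := hζpos j (le_of_lt hj)
    have hθne : (2 * θ j) ≠ 0 := by positivity
    have hne1 : (2 * θ j - 1) ≠ 0 := by intro h; nlinarith
    have hzne : ζ j ≠ 0 := ne_of_gt hz
    have h2 : (2 * θ j - 1) * ζ j = 2 * θ j * ζ (j + 1) := by
      have h := hζi j hj
      rw [div_mul_eq_mul_div, eq_div_iff hne1] at h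
      linear_combination h
    have hd : ζ j - ζ (j + 1) = ζ j / (2 * θ j) := by
      rw [eq_div_iff hθne]; linear_combination h2
    rw [hd, div_div_eq_mul_div]
    field_simp
  have htermN : ζ N ^ 2 / (ζ N - ζ (N + 1)) = θ N * ζ N := by
    have hθne : θ N ≠ 0 := by intro h; nlinarith
    have hne1 : (θ N - 1) ≠ 0 := by intro h; nlinarith
    have hzne : ζ N ≠ 0 := ne_of_gt hζNpos
    have h2 : (θ N - 1) * ζ N = θ N * ζ (N + 1) := by
      have h := hζN
      rw [div_mul_eq_mul_div, eq_div_iff hne1] at h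
      linear_combination h
    have hd : ζ N - ζ (N + 1) = ζ N / θ N := by
      rw [eq_div_iff hθne]; linear_combination h2
    rw [hd, div_div_eq_mul_div]
    field_simp
  -- partial sums
  have hsum : ∀ m, m < N → ∑ j ∈ Finset.range (m + 1), 2 * θ j * ζ j = 4 * θ m ^ 2 * ζ (m + 1) := by
    intro m
    induction m with
    | zero =>
      intro hm
      have h1 := hζi 0 (by omega)
      rw [h0] at h1
      norm_num at h1
      simp [Finset.sum_range_one, h0, h1]
      ring
    | succ m ih =>
      intro hm1
      have hm : m < N := by omega
      rw [Finset.sum_range_succ, ih hm]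
      have hsq := hsqi m hm1
      have hz : ζ (m + 1) = 2 * θ (m + 1) / (2 * θ (m + 1) - 1) * ζ (m + 2) := hζi (m + 1) hm1
      have hθ := hθ1 (m + 1) hm1
      have hne1 : (2 * θ (m + 1) - 1) ≠ 0 := by intro h; nlinarith
      have h2 : (2 * θ (m + 1) - 1) * ζ (m + 1) = 2 * θ (m + 1) * ζ (m + 2) := by
        have h := hz
        rw [div_mul_eq_mul_div, eq_div_iff hne1] at h
        linear_combination h
      linear_combination (-4 * ζ (m + 1)) * hsq + 2 * θ (m + 1) * h2
  -- assemble
  rw [Finset.sum_range_succ,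
    Finset.sum_congr rfl (fun j hj => hterm1 j (Finset.mem_range.mp hj)), htermN]
  have hNsum : ∑ j ∈ Finset.range N, 2 * θ j * ζ j = 4 * θ (N - 1) ^ 2 * ζ N := by
    have := hsum (N - 1) (by omega)
    rwa [show N - 1 + 1 = N by omega] at this
  rw [hNsum]
  have hθNne : θ N ≠ 0 := by intro h; nlinarith
  have hne1 : θ N - 1 ≠ 0 := by intro h; nlinarith
  have hne2 : 2 * θ N - 1 ≠ 0 := by intro h; nlinarith
  have hζNval : ζ N = R ^ 2 / (θ N * (2 * θ N - 1)) := by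
    rw [hζN, hζ1]
    field_simp
  rw [hζNval]
  field_simp
  rw [div_eq_iff (by linarith)]
  linear_combination (-2) * hsqN
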